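/- Let G and H both be strongly regular graphs with the same parameters (n, d, λ, ν), where λ ≥ ν. Then G and H are not isomorphic if and only if every bijection π : V(G) → V(H) satisfies MMC(π) ≥ λ − ν + 1. -/

import Mathlib

open SimpleGraph

section MismatchDefs

variable {V W : Type*}

/-- The mismatch graph `G^π − H`: the symmetric difference of the image of `G` under the
bijection `π` with `H`, as a graph on `V(H)`. Its edges are the positive edges
(edges of `G^π` not in `H`) together with the negative edges (edges of `H` not in `G^π`). -/
def mismatchGraph (G : SimpleGraph V) (H : SimpleGraph W) (π : V ≃ W) : SimpleGraph W :=
  symmDiff (G.map π.toEmbedding) H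

/-- The degree of a vertex in the mismatch graph `G^π − H`. -/
noncomputable def mismatchDeg (G : SimpleGraph V) (H : SimpleGraph W) (π : V ≃ W) (x : W) : ℕ :=
  ((mismatchGraph G H π).neighborSet x).ncard

/-- The number of positive edges of `G^π − H` incident to `x`. -/
noncomputable def posDeg (G : SimpleGraph V) (H : SimpleGraph W) (π : V ≃ W) (x : W) : ℕ :=
  ((G.map π.toEmbedding).neighborSet x \ H.neighborSet x).ncard

/-- The number of negative edges of `G^π − H` incident to `x`. -/
noncomputable def negDeg (G : SimpleGraph V) (H : SimpleGraph W) (π : V ≃ W) (x : W) : ℕ :=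
  (H.neighborSet x \ (G.map π.toEmbedding).neighborSet x).ncard

/-- The maximum mismatch count `MMC(π)`: the maximum degree of the mismatch graph `G^π − H`. -/
noncomputable def MMC [Fintype W] (G : SimpleGraph V) (H : SimpleGraph W) (π : V ≃ W) : ℕ :=
  Finset.univ.sup (mismatchDeg G H π)

/-- The edit mismatch norm `μ_edit(G^π, H)`: the number of edges of the mismatch graph. -/
noncomputable def muEdit (G : SimpleGraph V) (H : SimpleGraph W) (π : V ≃ W) : ℕ :=
  (mismatchGraph G H π).edgeSet.ncard

/-- The edit distance `δ_edit(G, H)`: the minimum of `μ_edit(G^π, H)` over all bijections. -/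
noncomputable def deltaEdit (G : SimpleGraph V) (H : SimpleGraph W) : ℕ :=
  ⨅ π : V ≃ W, muEdit G H π

open Classical in
/-- The signed adjacency matrix of the mismatch graph `G^π − H`:
`+1` on positive edges, `−1` on negative edges, `0` otherwise. -/
noncomputable def signedAdj (G : SimpleGraph V) (H : SimpleGraph W) (π : V ≃ W) :
    Matrix W W ℝ := fun x y =>
  if (G.map π.toEmbedding).Adj x y ∧ ¬ H.Adj x y then 1
  else if H.Adj x y ∧ ¬ (G.map π.toEmbedding).Adj x y then -1 else 0

/-- The `ℓ_p` norm of a vector over a finite index type. -/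
noncomputable def lpNorm [Fintype W] (p : ℝ) (x : W → ℝ) : ℝ :=
  (∑ i, |x i| ^ p) ^ p⁻¹

/-- The `ℓ_p`-operator norm of a matrix: `sup_{x ≠ 0} ‖Mx‖_p / ‖x‖_p`. -/
noncomputable def lpOpNorm [Fintype W] (p : ℝ) (M : Matrix W W ℝ) : ℝ :=
  ⨆ x : {x : W → ℝ // x ≠ 0}, lpNorm p (M.mulVec x.1) / lpNorm p x.1

end MismatchDefs


section AuxProof

open Set

lemma mapEquiv_adj' {V W : Type*} (G : SimpleGraph V) (π : V ≃ W) (x y : W) :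
    (G.map π.toEmbedding).Adj x y ↔ G.Adj (π.symm x) (π.symm y) := by
  simp only [SimpleGraph.map_adj, Equiv.toEmbedding_apply]
  constructor
  · rintro ⟨u, v, h, rfl, rfl⟩; simpa using h
  · intro h; exact ⟨π.symm x, π.symm y, h, by simp, by simp⟩

lemma mapEquiv_neighborSet {V W : Type*} (G : SimpleGraph V) (π : V ≃ W) (x : W) :
    (G.map π.toEmbedding).neighborSet x = π '' G.neighborSet (π.symm x) := by
  ext z
  simp only [SimpleGraph.mem_neighborSet, mapEquiv_adj', Set.mem_image]
  constructor
  · intro h; exact ⟨π.symm z, by simpa using h, by simp⟩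
  · rintro ⟨u, h, rfl⟩; simpa using h

lemma ncard_eq_fcard {α : Type*} (s : Set α) [Fintype s] : s.ncard = Fintype.card s := by
  rw [← Nat.card_coe_set_eq, Nat.card_eq_fintype_card]

lemma ncard_nbr_eq_degree {V : Type*} [Fintype V] (G : SimpleGraph V) [DecidableRel G.Adj]
    (v : V) : (G.neighborSet v).ncard = G.degree v := by
  rw [ncard_eq_fcard, SimpleGraph.card_neighborSet_eq_degree]

lemma key_mismatch {V W : Type*} [Fintype V] [Fintype W]
    (G : SimpleGraph V) (H : SimpleGraph W) [DecidableRel G.Adj] [DecidableRel H.Adj]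
    {n d l ν : ℕ} (hlν : ν ≤ l)
    (hG : G.IsSRGWith n d l ν) (hH : H.IsSRGWith n d l ν)
    (π : V ≃ W) {x y : W} (hxy : (mismatchGraph G H π).Adj x y) :
    l - ν + 1 ≤ MMC G H π := by
  classical
  set G' := G.map π.toEmbedding with hG'
  have hG'deg : ∀ z, (G'.neighborSet z).ncard = d := by
    intro z
    rw [hG', mapEquiv_neighborSet, Set.ncard_image_of_injective _ π.injective,
      ncard_nbr_eq_degree]
    exact hG.regular _
  have hHdeg : ∀ z, (H.neighborSet z).ncard = d := by
    intro z; rw [ncard_nbr_eq_degree]; exact hH.regular _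
  have hG'cn : ∀ a b : W, G'.commonNeighbors a b
      = π '' (G.commonNeighbors (π.symm a) (π.symm b)) := by
    intro a b
    rw [SimpleGraph.commonNeighbors, SimpleGraph.commonNeighbors, hG',
      mapEquiv_neighborSet, mapEquiv_neighborSet, ← Set.image_inter π.injective]
  have hG'adj : ∀ a b : W, G'.Adj a b → (G'.commonNeighbors a b).ncard = l := by
    intro a b hab
    rw [hG'cn, Set.ncard_image_of_injective _ π.injective, ncard_eq_fcard]
    exact hG.of_adj _ _ ((mapEquiv_adj' G π a b).mp hab)
  have hG'nonadj : ∀ a b : W, a ≠ b → ¬ G'.Adj a b →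
      (G'.commonNeighbors a b).ncard = ν := by
    intro a b hne hnadj
    rw [hG'cn, Set.ncard_image_of_injective _ π.injective, ncard_eq_fcard]
    exact hG.of_not_adj (fun h => hne (by simpa using congrArg π h))
      (fun h => hnadj ((mapEquiv_adj' G π a b).mpr h))
  have hHcnadj : ∀ a b : W, H.Adj a b → (H.commonNeighbors a b).ncard = l := by
    intro a b hab; rw [ncard_eq_fcard]; exact hH.of_adj _ _ hab
  have hHcnnonadj : ∀ a b : W, a ≠ b → ¬ H.Adj a b →
      (H.commonNeighbors a b).ncard = ν := by
    intro a b hne hnadj; rw [ncard_eq_fcard]; exact hH.of_not_adj hne hnadj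
  have hmadj : ∀ a b : W, (mismatchGraph G H π).Adj a b ↔
      (G'.Adj a b ∧ ¬ H.Adj a b) ∨ (H.Adj a b ∧ ¬ G'.Adj a b) := by
    intro a b
    rw [mismatchGraph, symmDiff_def]
    simp [hG']
  set P : W → Set W := fun z => G'.neighborSet z \ H.neighborSet z with hP
  set M : W → Set W := fun z => H.neighborSet z \ G'.neighborSet z with hM
  have hPM : ∀ z, (P z).ncard = (M z).ncard := by
    intro z
    exact (Set.ncard_eq_ncard_iff_ncard_diff_eq_ncard_diff (Set.toFinite _)
      (Set.toFinite _)).mp (by rw [hG'deg, hHdeg])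
  have hdeg2 : ∀ z, mismatchDeg G H π z = 2 * (P z).ncard := by
    intro z
    have hnbr : (mismatchGraph G H π).neighborSet z = P z ∪ M z := by
      ext w
      simp only [SimpleGraph.mem_neighborSet, hmadj, hP, hM, Set.mem_union, Set.mem_diff]
    rw [mismatchDeg, hnbr, Set.ncard_union_eq disjoint_sdiff_sdiff (Set.toFinite _)
      (Set.toFinite _)]
    have h := hPM z
    simp only [hP, hM] at h ⊢
    omega
  have hub : ∀ z, 2 * (P z).ncard ≤ MMC G H π := by
    intro z
    rw [← hdeg2]
    exact Finset.le_sup (Finset.mem_univ z)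
  rw [hmadj] at hxy
  have hle : l ≤ ν + ((P x).ncard - 1) + ((P y).ncard - 1)
      ∧ 1 ≤ (P x).ncard ∧ 1 ≤ (P y).ncard := by
    rcases hxy with ⟨hGxy, hHxy⟩ | ⟨hHxy, hGxy⟩
    · -- positive edge
      have hxney : x ≠ y := hGxy.ne
      have hyPx : y ∈ P x := ⟨hGxy, hHxy⟩
      have hxPy : x ∈ P y := ⟨hGxy.symm, fun h => hHxy h.symm⟩
      have hsub : G'.commonNeighbors x y ⊆
          H.commonNeighbors x y ∪ (P x \ {y}) ∪ (P y \ {x}) := by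
        rintro z ⟨hzx, hzy⟩
        simp only [SimpleGraph.mem_neighborSet] at hzx hzy
        by_cases h1 : H.Adj x z
        · by_cases h2 : H.Adj y z
          · exact Or.inl (Or.inl ⟨h1, h2⟩)
          · exact Or.inr ⟨⟨hzy, h2⟩, hzx.ne'⟩
        · exact Or.inl (Or.inr ⟨⟨hzx, h1⟩, hzy.ne'⟩)
      have hcard := Set.ncard_le_ncard hsub (Set.toFinite _)
      have h1 := Set.ncard_union_le (H.commonNeighbors x y ∪ (P x \ {y})) (P y \ {x})
      have h2 := Set.ncard_union_le (H.commonNeighbors x y) (P x \ {y})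
      rw [hG'adj x y hGxy] at hcard
      rw [hHcnnonadj x y hxney hHxy] at h2
      rw [Set.ncard_diff_singleton_of_mem hyPx] at h2
      rw [Set.ncard_diff_singleton_of_mem hxPy] at h1
      have hp1 : 0 < (P x).ncard := (Set.ncard_pos (Set.toFinite _)).mpr ⟨y, hyPx⟩
      have hp2 : 0 < (P y).ncard := (Set.ncard_pos (Set.toFinite _)).mpr ⟨x, hxPy⟩
      exact ⟨by omega, by omega, by omega⟩
    · -- negative edge
      have hxney : x ≠ y := hHxy.ne
      have hyMx : y ∈ M x := ⟨hHxy, hGxy⟩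
      have hxMy : x ∈ M y := ⟨hHxy.symm, fun h => hGxy h.symm⟩
      have hsub : H.commonNeighbors x y ⊆
          G'.commonNeighbors x y ∪ (M x \ {y}) ∪ (M y \ {x}) := by
        rintro z ⟨hzx, hzy⟩
        simp only [SimpleGraph.mem_neighborSet] at hzx hzy
        by_cases h1 : G'.Adj x z
        · by_cases h2 : G'.Adj y z
          · exact Or.inl (Or.inl ⟨h1, h2⟩)
          · exact Or.inr ⟨⟨hzy, h2⟩, hzx.ne'⟩
        · exact Or.inl (Or.inr ⟨⟨hzx, h1⟩, hzy.ne'⟩)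
      have hcard := Set.ncard_le_ncard hsub (Set.toFinite _)
      have h1 := Set.ncard_union_le (G'.commonNeighbors x y ∪ (M x \ {y})) (M y \ {x})
      have h2 := Set.ncard_union_le (G'.commonNeighbors x y) (M x \ {y})
      rw [hHcnadj x y hHxy] at hcard
      rw [hG'nonadj x y hxney hGxy] at h2
      rw [Set.ncard_diff_singleton_of_mem hyMx] at h2
      rw [Set.ncard_diff_singleton_of_mem hxMy] at h1
      have hp1 : 0 < (M x).ncard := (Set.ncard_pos (Set.toFinite _)).mpr ⟨y, hyMx⟩
      have hp2 : 0 < (M y).ncard := (Set.ncard_pos (Set.toFinite _)).mpr ⟨x, hxMy⟩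
      rw [hPM x, hPM y]
      exact ⟨by omega, by omega, by omega⟩
  have hx := hub x
  have hy := hub y
  omega

end AuxProof

/-- Let `G` and `H` be strongly regular graphs with the same parameters
`(n, d, l, ν)` with `l ≥ ν`. Then `G` and `H` are not isomorphic if and only if every
bijection `π : V(G) → V(H)` satisfies `MMC(π) ≥ l − ν + 1`. -/
theorem statement_16 {V W : Type*} [Fintype V] [Fintype W]
    (G : SimpleGraph V) (H : SimpleGraph W) [DecidableRel G.Adj] [DecidableRel H.Adj]
    (n d l ν : ℕ) (hlν : ν ≤ l)
    (hG : G.IsSRGWith n d l ν) (hH : H.IsSRGWith n d l ν) :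
    (¬ Nonempty (G ≃g H)) ↔ ∀ π : V ≃ W, l - ν + 1 ≤ MMC G H π := by
  constructor
  · intro hni π
    by_cases hadj : ∃ x y, (mismatchGraph G H π).Adj x y
    · obtain ⟨x, y, hxy⟩ := hadj
      exact key_mismatch G H hlν hG hH π hxy
    · exfalso
      apply hni
      push_neg at hadj
      have hbot : mismatchGraph G H π = ⊥ := by
        ext a b
        simp only [SimpleGraph.bot_adj, iff_false]
        exact hadj a b
      have hmap : G.map π.toEmbedding = H := symmDiff_eq_bot.mp hbot
      exact ⟨⟨π, by intro u v; rw [← hmap, mapEquiv_adj']; simp⟩⟩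
  · rintro h ⟨e⟩
    have hmap : G.map e.toEquiv.toEmbedding = H := by
      ext a b
      rw [mapEquiv_adj']
      exact e.symm.map_rel_iff
    have hbot : mismatchGraph G H e.toEquiv = ⊥ := by
      rw [mismatchGraph, hmap, symmDiff_self]
    have hMMC : MMC G H e.toEquiv = 0 := by
      refine Nat.le_zero.mp (Finset.sup_le fun z _ => ?_)
      rw [mismatchDeg, hbot]
      have hempty : ((⊥ : SimpleGraph W).neighborSet z) = ∅ := by ext w; simp
      simp [hempty]
    have := h e.toEquiv
    omega
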